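/- If m > 2, then in the localization S[x_1^{-1}] of S at the powers of x_1, the set of elements of the form f/x_1^k with f ∈ S^G and k ≥ 0 equals the F-subalgebra of S[x_1^{-1}] generated by x_1, …, x_m, N_1, N_2, t_3, …, t_{m+1} together with x_1^{-1}; i.e. S^G[x_1^{-1}] = F[x_1,…,x_m,N_1,N_2,t_3,…,t_{m+1}][x_1^{-1}]. -/

import Mathlib

/-!
STATEMENT 17: For the representation Ω^{−m}(F) of the Klein four group G = ⟨σ1,σ2⟩ over a
field F of characteristic 2 (action on S = F[x_1,…,x_m,y_1,…,y_{m+1}]: σ_i(x_j) = x_j,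
σ1(y_j) = y_j + x_j, σ2(y_j) = y_j + x_{j−1}, with x_0 = x_{m+1} = 0), if m > 2 then, in
the localization S[x_1^{-1}], the set of elements of the form f/x_1^k with f ∈ S^G and
k ≥ 0 equals the F-subalgebra generated by the images of x_1,…,x_m, N_1, N_2,
t_3,…,t_{m+1} together with x_1^{-1} (the unique element z with z·x_1 = 1).
-/

open MvPolynomial

noncomputable section

/-- The variable x_i (1-based index); by convention 0 for i outside {1,…,m}. -/
def xw (F : Type) [Field F] (m : ℕ) (i : ℕ) : MvPolynomial (Fin m ⊕ Fin (m + 1)) F :=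
  if h : 1 ≤ i ∧ i ≤ m then X (Sum.inl ⟨i - 1, by omega⟩) else 0

/-- The variable y_i (1-based index); by convention 0 for i outside {1,…,m+1}. -/
def yw (F : Type) [Field F] (m : ℕ) (i : ℕ) : MvPolynomial (Fin m ⊕ Fin (m + 1)) F :=
  if h : 1 ≤ i ∧ i ≤ m + 1 then X (Sum.inr ⟨i - 1, by omega⟩) else 0

/-- n_i = y_i² + x_i y_i. -/
def nw (F : Type) [Field F] (m : ℕ) (i : ℕ) : MvPolynomial (Fin m ⊕ Fin (m + 1)) F :=
  yw F m i ^ 2 + xw F m i * yw F m i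

/-- u_{ab} = x_a y_b + x_b y_a (with the zero conventions for out-of-range indices). -/
def uw (F : Type) [Field F] (m : ℕ) (a b : ℕ) : MvPolynomial (Fin m ⊕ Fin (m + 1)) F :=
  xw F m a * yw F m b + xw F m b * yw F m a

/-- N_i = n_i + Σ_{j=1}^{i−1} (u_{i−j,i+j} + u_{i−j,i+j−1}). -/
def Nw (F : Type) [Field F] (m : ℕ) (i : ℕ) : MvPolynomial (Fin m ⊕ Fin (m + 1)) F :=
  nw F m i + ∑ j ∈ Finset.Icc 1 (i - 1), (uw F m (i - j) (i + j) + uw F m (i - j) (i + j - 1))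

/-- t_j = u_{12}·x_{j−1} + u_{1j}·x_1. -/
def tw (F : Type) [Field F] (m : ℕ) (j : ℕ) : MvPolynomial (Fin m ⊕ Fin (m + 1)) F :=
  uw F m 1 2 * xw F m (j - 1) + uw F m 1 j * xw F m 1

/-- The invariant subalgebra S^G for G = ⟨σ1, σ2⟩. -/
def invSub {F : Type} [Field F] {τ : Type} (σ1 σ2 : MvPolynomial τ F ≃ₐ[F] MvPolynomial τ F) :
    Subalgebra F (MvPolynomial τ F) :=
  AlgHom.equalizer (σ1 : MvPolynomial τ F →ₐ[F] MvPolynomial τ F) (AlgHom.id F _) ⊓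
    AlgHom.equalizer (σ2 : MvPolynomial τ F →ₐ[F] MvPolynomial τ F) (AlgHom.id F _)

/-- The transfer Tr(f) = Σ_{g ∈ G} g·f for the Klein four group G = {1, σ1, σ2, σ1σ2}. -/
def trf {F : Type} [Field F] {τ : Type} (σ1 σ2 : MvPolynomial τ F ≃ₐ[F] MvPolynomial τ F)
    (f : MvPolynomial τ F) : MvPolynomial τ F :=
  f + σ1 f + σ2 f + σ1 (σ2 f)

/-- Products of two homogeneous G-invariants of positive degree; the span of this set over
S^G is (S^G_+)², the square of the ideal of S^G generated by the homogeneous invariants of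
positive degree.  An invariant is *indecomposable* iff it does not lie in this span. -/
def decompSet {F : Type} [Field F] {τ : Type}
    (σ1 σ2 : MvPolynomial τ F ≃ₐ[F] MvPolynomial τ F) : Set (MvPolynomial τ F) :=
  {f | ∃ a b : MvPolynomial τ F,
    (σ1 a = a ∧ σ2 a = a ∧ ∃ d, 0 < d ∧ a.IsHomogeneous d) ∧
    (σ1 b = b ∧ σ2 b = b ∧ ∃ d, 0 < d ∧ b.IsHomogeneous d) ∧ f = a * b}


section Aux17
set_option linter.unusedSectionVars false

variable {F : Type} [Field F] [CharP F 2] {m : ℕ}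

lemma two_eq_zero' : (2 : MvPolynomial (Fin m ⊕ Fin (m + 1)) F) = 0 := by
  have hF : (2 : F) = 0 := by exact_mod_cast CharP.cast_eq_zero F 2
  rw [← map_ofNat (C : F →+* MvPolynomial (Fin m ⊕ Fin (m + 1)) F) 2, hF, map_zero]

lemma xw_out {i : ℕ} (h : ¬(1 ≤ i ∧ i ≤ m)) : xw F m i = 0 := dif_neg h
lemma xw_zero : xw F m 0 = 0 := xw_out (by omega)
lemma yw_out {i : ℕ} (h : ¬(1 ≤ i ∧ i ≤ m + 1)) : yw F m i = 0 := dif_neg h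

lemma Nw1_eq : Nw F m 1 = yw F m 1 ^ 2 + xw F m 1 * yw F m 1 := by
  rw [Nw, nw, show (1 - 1 : ℕ) = 0 from rfl, Finset.Icc_eq_empty (by omega),
    Finset.sum_empty, add_zero]

lemma Nw2_eq : Nw F m 2 = (yw F m 2 ^ 2 + xw F m 2 * yw F m 2) + (uw F m 1 3 + uw F m 1 2) := by
  rw [Nw, nw, show (2 - 1 : ℕ) = 1 from rfl, Finset.Icc_self, Finset.sum_singleton]

variable (σ1 σ2 : MvPolynomial (Fin m ⊕ Fin (m + 1)) F ≃ₐ[F] MvPolynomial (Fin m ⊕ Fin (m + 1)) F)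

lemma sy1 (hσ1y : ∀ i, 1 ≤ i → i ≤ m + 1 → σ1 (yw F m i) = yw F m i + xw F m i) (i : ℕ) :
    σ1 (yw F m i) = yw F m i + xw F m i := by
  by_cases h : 1 ≤ i ∧ i ≤ m + 1
  · exact hσ1y i h.1 h.2
  · rw [yw_out h, xw_out (fun hc => h ⟨hc.1, by omega⟩), map_zero, add_zero]

lemma sy2 (hσ2y : ∀ i, 1 ≤ i → i ≤ m + 1 → σ2 (yw F m i) = yw F m i + xw F m (i - 1)) (i : ℕ) :
    σ2 (yw F m i) = yw F m i + xw F m (i - 1) := by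
  by_cases h : 1 ≤ i ∧ i ≤ m + 1
  · exact hσ2y i h.1 h.2
  · rw [yw_out h, xw_out (by omega), map_zero, add_zero]

variable (hσ1x : ∀ i, σ1 (xw F m i) = xw F m i)
  (hσ2x : ∀ i, σ2 (xw F m i) = xw F m i)
  (hy1 : ∀ i, σ1 (yw F m i) = yw F m i + xw F m i)
  (hy2 : ∀ i, σ2 (yw F m i) = yw F m i + xw F m (i - 1))

include hσ1x hy1 in
lemma invN1_1 : σ1 (Nw F m 1) = Nw F m 1 := by
  have h2 : (2 : MvPolynomial (Fin m ⊕ Fin (m + 1)) F) = 0 := two_eq_zero'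
  rw [Nw1_eq]
  simp only [map_add, map_mul, map_pow, hσ1x, hy1]
  linear_combination (xw F m 1 * yw F m 1 + xw F m 1 ^ 2) * h2

include hσ2x hy2 in
lemma invN1_2 : σ2 (Nw F m 1) = Nw F m 1 := by
  rw [Nw1_eq]
  simp only [map_add, map_mul, map_pow, hσ2x, hy2, show (1 - 1 : ℕ) = 0 from rfl, xw_zero]
  ring

include hσ1x hy1 in
lemma invN2_1 : σ1 (Nw F m 2) = Nw F m 2 := by
  have h2 : (2 : MvPolynomial (Fin m ⊕ Fin (m + 1)) F) = 0 := two_eq_zero'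
  rw [Nw2_eq]; simp only [uw]
  simp only [map_add, map_mul, map_pow, hσ1x, hy1]
  linear_combination (xw F m 2 * yw F m 2 + xw F m 2 ^ 2 + xw F m 1 * xw F m 3
    + xw F m 1 * xw F m 2) * h2

include hσ2x hy2 in
lemma invN2_2 : σ2 (Nw F m 2) = Nw F m 2 := by
  have h2 : (2 : MvPolynomial (Fin m ⊕ Fin (m + 1)) F) = 0 := two_eq_zero'
  rw [Nw2_eq]; simp only [uw]
  simp only [map_add, map_mul, map_pow, hσ2x, hy2, show (1 - 1 : ℕ) = 0 from rfl,
    show (2 - 1 : ℕ) = 1 from rfl, show (3 - 1 : ℕ) = 2 from rfl, xw_zero]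
  linear_combination (xw F m 1 * yw F m 2 + xw F m 1 * xw F m 2 + xw F m 1 ^ 2) * h2

include hσ1x hy1 in
lemma invtw_1 (j : ℕ) : σ1 (tw F m j) = tw F m j := by
  have h2 : (2 : MvPolynomial (Fin m ⊕ Fin (m + 1)) F) = 0 := two_eq_zero'
  rw [tw]; simp only [uw]
  simp only [map_add, map_mul, map_pow, hσ1x, hy1]
  linear_combination (xw F m 1 * xw F m 2 * xw F m (j - 1)
    + xw F m 1 ^ 2 * xw F m j) * h2

include hσ2x hy2 in
lemma invtw_2 (j : ℕ) : σ2 (tw F m j) = tw F m j := by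
  have h2 : (2 : MvPolynomial (Fin m ⊕ Fin (m + 1)) F) = 0 := two_eq_zero'
  rw [tw]; simp only [uw]
  simp only [map_add, map_mul, map_pow, hσ2x, hy2, show (1 - 1 : ℕ) = 0 from rfl,
    show (2 - 1 : ℕ) = 1 from rfl, xw_zero]
  linear_combination (xw F m 1 ^ 2 * xw F m (j - 1)) * h2

include hσ1x hy1 in
lemma invU_1 : σ1 (uw F m 1 2) = uw F m 1 2 := by
  have h2 : (2 : MvPolynomial (Fin m ⊕ Fin (m + 1)) F) = 0 := two_eq_zero'
  simp only [uw]
  simp only [map_add, map_mul, hσ1x, hy1]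
  linear_combination (xw F m 1 * xw F m 2) * h2

include hσ2x hy2 in
lemma sU_2 : σ2 (uw F m 1 2) = uw F m 1 2 + xw F m 1 ^ 2 := by
  simp only [uw]
  simp only [map_add, map_mul, hσ2x, hy2, show (1 - 1 : ℕ) = 0 from rfl,
    show (2 - 1 : ℕ) = 1 from rfl, xw_zero]
  ring

lemma idI1 : yw F m 1 ^ 2 = Nw F m 1 + xw F m 1 * yw F m 1 := by
  have h2 : (2 : MvPolynomial (Fin m ⊕ Fin (m + 1)) F) = 0 := two_eq_zero'
  rw [Nw1_eq]; linear_combination (-(xw F m 1 * yw F m 1)) * h2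

lemma idI2 : uw F m 1 2 ^ 2 = (xw F m 1 ^ 2 * Nw F m 2 + xw F m 2 ^ 2 * Nw F m 1
    + xw F m 1 * tw F m 3) + xw F m 1 ^ 2 * uw F m 1 2 := by
  have h2 : (2 : MvPolynomial (Fin m ⊕ Fin (m + 1)) F) = 0 := two_eq_zero'
  rw [Nw1_eq, Nw2_eq, tw]; simp only [uw]
  simp only [show (3 - 1 : ℕ) = 2 from rfl]
  linear_combination (xw F m 1 * xw F m 2 * yw F m 1 * yw F m 2
    - xw F m 1 * xw F m 2 ^ 2 * yw F m 1 - xw F m 1 ^ 2 * xw F m 3 * yw F m 1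
    - xw F m 1 ^ 2 * xw F m 2 * yw F m 2 - xw F m 1 ^ 2 * xw F m 2 * yw F m 1
    - xw F m 1 ^ 3 * yw F m 3 - xw F m 1 ^ 3 * yw F m 2) * h2

lemma idI3 : xw F m 1 * yw F m 2 = uw F m 1 2 + xw F m 2 * yw F m 1 := by
  have h2 : (2 : MvPolynomial (Fin m ⊕ Fin (m + 1)) F) = 0 := two_eq_zero'
  simp only [uw]; linear_combination (-(xw F m 2 * yw F m 1)) * h2

lemma idI4 (j : ℕ) : xw F m 1 ^ 2 * yw F m j = tw F m j + xw F m (j - 1) * uw F m 1 2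
    + xw F m 1 * xw F m j * yw F m 1 := by
  have h2 : (2 : MvPolynomial (Fin m ⊕ Fin (m + 1)) F) = 0 := two_eq_zero'
  rw [tw]; simp only [uw]
  linear_combination (-(xw F m 2 * xw F m (j - 1) * yw F m 1
    + xw F m 1 * xw F m j * yw F m 1 + xw F m 1 * xw F m (j - 1) * yw F m 2)) * h2

lemma quad_mul {A : Type*} [CommRing A] (Y W p q r s a b c d a' b' c' d' : A)
    (hY : Y * Y = p + q * Y) (hW : W * W = r + s * W) :
    (a + b * Y + c * W + d * (Y * W)) * (a' + b' * Y + c' * W + d' * (Y * W)) =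
      (a * a' + b * b' * p + c * c' * r + d * d' * (p * r))
      + (a * b' + a' * b + b * b' * q + (c * d' + c' * d) * r + d * d' * (q * r)) * Y
      + (a * c' + a' * c + c * c' * s + (b * d' + b' * d) * p + d * d' * (p * s)) * W
      + (a * d' + a' * d + b * c' + b' * c + (b * d' + b' * d) * q + (c * d' + c' * d) * s
          + d * d' * (q * s)) * (Y * W) := by
  linear_combination (b * b' + (b * d' + b' * d) * W + d * d' * (W * W)) * hY
    + (c * c' + (c * d' + c' * d) * Y + d * d' * (p + q * Y)) * hW

end Aux17


set_option maxHeartbeats 2000000 in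
theorem stmt_17 (F : Type) [Field F] [CharP F 2] (m : ℕ) (hm : 2 < m)
    (σ1 σ2 : MvPolynomial (Fin m ⊕ Fin (m + 1)) F ≃ₐ[F] MvPolynomial (Fin m ⊕ Fin (m + 1)) F)
    (hσ1x : ∀ i, σ1 (xw F m i) = xw F m i)
    (hσ2x : ∀ i, σ2 (xw F m i) = xw F m i)
    (hσ1y : ∀ i, 1 ≤ i → i ≤ m + 1 → σ1 (yw F m i) = yw F m i + xw F m i)
    (hσ2y : ∀ i, 1 ≤ i → i ≤ m + 1 → σ2 (yw F m i) = yw F m i + xw F m (i - 1)) :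
    {z : Localization.Away (xw F m 1) | ∃ (f : MvPolynomial (Fin m ⊕ Fin (m + 1)) F) (k : ℕ),
        σ1 f = f ∧ σ2 f = f ∧
        algebraMap (MvPolynomial (Fin m ⊕ Fin (m + 1)) F) (Localization.Away (xw F m 1))
            (xw F m 1) ^ k * z
          = algebraMap (MvPolynomial (Fin m ⊕ Fin (m + 1)) F) (Localization.Away (xw F m 1)) f}
      = ↑(Algebra.adjoin F
          ((algebraMap (MvPolynomial (Fin m ⊕ Fin (m + 1)) F) (Localization.Away (xw F m 1)) ''
              ((xw F m '' Set.Icc 1 m) ∪ {Nw F m 1, Nw F m 2} ∪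
                (tw F m '' Set.Icc 3 (m + 1)))) ∪
            {z : Localization.Away (xw F m 1) |
              z * algebraMap (MvPolynomial (Fin m ⊕ Fin (m + 1)) F)
                (Localization.Away (xw F m 1)) (xw F m 1) = 1})) := by
  classical
  have hy1 : ∀ i, σ1 (yw F m i) = yw F m i + xw F m i := sy1 σ1 hσ1y
  have hy2 : ∀ i, σ2 (yw F m i) = yw F m i + xw F m (i - 1) := sy2 σ2 hσ2y
  have hN11 := invN1_1 σ1 hσ1x hy1
  have hN12 := invN1_2 σ2 hσ2x hy2
  have hN21 := invN2_1 σ1 hσ1x hy1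
  have hN22 := invN2_2 σ2 hσ2x hy2
  have ht1 := invtw_1 σ1 hσ1x hy1
  have ht2 := invtw_2 σ2 hσ2x hy2
  have hU1 := invU_1 σ1 hσ1x hy1
  have hU2 := sU_2 σ2 hσ2x hy2
  have hCinv : ∀ (τ : MvPolynomial (Fin m ⊕ Fin (m + 1)) F ≃ₐ[F]
      MvPolynomial (Fin m ⊕ Fin (m + 1)) F) (r : F), τ (C r) = C r := fun τ r => by
    rw [← MvPolynomial.algebraMap_eq]; exact τ.commutes r
  have hx1eq : xw F m 1 = X (Sum.inl (⟨0, by omega⟩ : Fin m)) := by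
    rw [xw, dif_pos ⟨le_refl 1, by omega⟩]
  have hx1ne : xw F m 1 ≠ 0 := by rw [hx1eq]; exact X_ne_zero _
  set ι := algebraMap (MvPolynomial (Fin m ⊕ Fin (m + 1)) F)
      (Localization.Away (xw F m 1)) with hι
  have hinj : Function.Injective ι :=
    IsLocalization.injective _ (powers_le_nonZeroDivisors_of_noZeroDivisors hx1ne)
  set Q := ι (xw F m 1) with hQ
  set Y := ι (yw F m 1) with hY
  set W := ι (uw F m 1 2) with hW
  set zinv := IsLocalization.Away.invSelf
      (S := Localization.Away (xw F m 1)) (xw F m 1) with hzinv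
  have hQz : Q * zinv = 1 := IsLocalization.Away.mul_invSelf (xw F m 1)
  set B := Algebra.adjoin F
      ((ι '' ((xw F m '' Set.Icc 1 m) ∪ {Nw F m 1, Nw F m 2} ∪ (tw F m '' Set.Icc 3 (m + 1))))
        ∪ {z : Localization.Away (xw F m 1) | z * Q = 1}) with hB
  -- memberships
  have hxB : ∀ i, ι (xw F m i) ∈ B := by
    intro i
    by_cases h : 1 ≤ i ∧ i ≤ m
    · exact Algebra.subset_adjoin (Set.mem_union_left _ (Set.mem_image_of_mem ι
        (Set.mem_union_left _ (Set.mem_union_left _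
          (Set.mem_image_of_mem _ (Set.mem_Icc.mpr h))))))
    · rw [xw_out h, map_zero]; exact zero_mem B
  have hN1B : ι (Nw F m 1) ∈ B :=
    Algebra.subset_adjoin (Set.mem_union_left _ (Set.mem_image_of_mem ι
      (Set.mem_union_left _ (Set.mem_union_right _ (Set.mem_insert _ _)))))
  have hN2B : ι (Nw F m 2) ∈ B :=
    Algebra.subset_adjoin (Set.mem_union_left _ (Set.mem_image_of_mem ι
      (Set.mem_union_left _ (Set.mem_union_right _
        (Set.mem_insert_of_mem _ rfl)))))
  have htB : ∀ j, 3 ≤ j → j ≤ m + 1 → ι (tw F m j) ∈ B := fun j h3 hle =>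
    Algebra.subset_adjoin (Set.mem_union_left _ (Set.mem_image_of_mem ι
      (Set.mem_union_right _ (Set.mem_image_of_mem _ (Set.mem_Icc.mpr ⟨h3, hle⟩)))))
  have hzB : zinv ∈ B := Algebra.subset_adjoin (Set.mem_union_right _
    (by simp only [Set.mem_setOf_eq]; rw [mul_comm]; exact hQz))
  have hQB : Q ∈ B := hxB 1
  -- extended maps
  have hu1 : IsUnit ((ι.comp σ1.toAlgHom.toRingHom) (xw F m 1)) := by
    show IsUnit (ι (σ1 (xw F m 1)))
    rw [hσ1x 1]
    exact IsLocalization.Away.algebraMap_isUnit (S := Localization.Away (xw F m 1)) (xw F m 1)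
  have hu2 : IsUnit ((ι.comp σ2.toAlgHom.toRingHom) (xw F m 1)) := by
    show IsUnit (ι (σ2 (xw F m 1)))
    rw [hσ2x 1]
    exact IsLocalization.Away.algebraMap_isUnit (S := Localization.Away (xw F m 1)) (xw F m 1)
  set τ1 : Localization.Away (xw F m 1) →+* Localization.Away (xw F m 1) :=
    IsLocalization.Away.lift (xw F m 1) hu1 with hτ1def
  set τ2 : Localization.Away (xw F m 1) →+* Localization.Away (xw F m 1) :=
    IsLocalization.Away.lift (xw F m 1) hu2 with hτ2def
  have hτ1 : ∀ a, τ1 (ι a) = ι (σ1 a) := fun a => by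
    exact IsLocalization.Away.lift_eq (xw F m 1) hu1 a
  have hτ2 : ∀ a, τ2 (ι a) = ι (σ2 a) := fun a => by
    exact IsLocalization.Away.lift_eq (xw F m 1) hu2 a
  have hinvu : ∀ w w' : Localization.Away (xw F m 1), w * Q = 1 → w' * Q = 1 → w = w' := by
    intro w w' h h'
    calc w = w * (w' * Q) := by rw [h', mul_one]
    _ = w' * (w * Q) := by ring
    _ = w' := by rw [h, mul_one]
  have hfix : ∀ (τ : Localization.Away (xw F m 1) →+* Localization.Away (xw F m 1))
      (σ : MvPolynomial (Fin m ⊕ Fin (m + 1)) F ≃ₐ[F] MvPolynomial (Fin m ⊕ Fin (m + 1)) F),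
      (∀ a, τ (ι a) = ι (σ a)) → (∀ i, σ (xw F m i) = xw F m i) →
      σ (Nw F m 1) = Nw F m 1 → σ (Nw F m 2) = Nw F m 2 →
      (∀ j, σ (tw F m j) = tw F m j) →
      ∀ w ∈ B, τ w = w := by
    intro τ σ hτ hσx hσN1 hσN2 hσt w hw
    rw [hB] at hw
    induction hw using Algebra.adjoin_induction with
    | mem g hg =>
      rcases hg with hg | hg
      · obtain ⟨s, hs, rfl⟩ := hg
        rcases hs with (⟨i, hi, rfl⟩ | hs) | ⟨j, hj, rfl⟩
        · rw [hτ, hσx]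
        · simp only [Set.mem_insert_iff, Set.mem_singleton_iff] at hs
          rcases hs with rfl | rfl
          · rw [hτ, hσN1]
          · rw [hτ, hσN2]
        · rw [hτ, hσt]
      · simp only [Set.mem_setOf_eq] at hg
        have hτQ : τ Q = Q := by rw [hQ, hτ, hσx 1]
        have h1 : τ g * Q = 1 := by
          rw [← hτQ, ← map_mul, hg, map_one]
        exact hinvu _ _ h1 hg
    | algebraMap r =>
      have hr : (algebraMap F (Localization.Away (xw F m 1)) r) = ι (C r) := by
        rw [← MvPolynomial.algebraMap_eq]
        exact IsScalarTower.algebraMap_apply F _ _ r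
      rw [hr, hτ, hCinv σ r]
    | add u v hu hv ihu ihv => rw [map_add, ihu, ihv]
    | mul u v hu hv ihu ihv => rw [map_mul, ihu, ihv]
  have hfix1 : ∀ w ∈ B, τ1 w = w := hfix τ1 σ1 hτ1 hσ1x hN11 hN21 ht1
  have hfix2 : ∀ w ∈ B, τ2 w = w := hfix τ2 σ2 hτ2 hσ2x hN12 hN22 ht2
  -- every element of B is an invariant divided by a power of x1
  have hBL : ∀ w ∈ B, ∃ f k, σ1 f = f ∧ σ2 f = f ∧ Q ^ k * w = ι f := by
    intro w hw
    rw [hB] at hw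
    induction hw using Algebra.adjoin_induction with
    | mem g hg =>
      rcases hg with hg | hg
      · obtain ⟨s, hs, rfl⟩ := hg
        have hinv : σ1 s = s ∧ σ2 s = s := by
          rcases hs with (⟨i, hi, rfl⟩ | hs) | ⟨j, hj, rfl⟩
          · exact ⟨hσ1x i, hσ2x i⟩
          · simp only [Set.mem_insert_iff, Set.mem_singleton_iff] at hs
            rcases hs with rfl | rfl
            · exact ⟨hN11, hN12⟩
            · exact ⟨hN21, hN22⟩
          · exact ⟨ht1 j, ht2 j⟩
        exact ⟨s, 0, hinv.1, hinv.2, by rw [pow_zero, one_mul]⟩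
      · simp only [Set.mem_setOf_eq] at hg
        exact ⟨1, 1, map_one σ1, map_one σ2, by rw [pow_one, map_one, mul_comm]; exact hg⟩
    | algebraMap r =>
      refine ⟨C r, 0, hCinv σ1 r, hCinv σ2 r, ?_⟩
      rw [pow_zero, one_mul, ← MvPolynomial.algebraMap_eq]
      exact (IsScalarTower.algebraMap_apply F _ _ r).symm
    | add u v hu hv ihu ihv =>
      obtain ⟨f1, k1, ha1, ha2, ha3⟩ := ihu
      obtain ⟨f2, l1, hb1, hb2, hb3⟩ := ihv
      refine ⟨xw F m 1 ^ l1 * f1 + xw F m 1 ^ k1 * f2, k1 + l1, ?_, ?_, ?_⟩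
      · simp only [map_add, map_mul, map_pow, hσ1x 1, ha1, hb1]
      · simp only [map_add, map_mul, map_pow, hσ2x 1, ha2, hb2]
      · simp only [map_add, map_mul, map_pow, ← hQ]
        linear_combination Q ^ l1 * ha3 + Q ^ k1 * hb3
    | mul u v hu hv ihu ihv =>
      obtain ⟨f1, k1, ha1, ha2, ha3⟩ := ihu
      obtain ⟨f2, l1, hb1, hb2, hb3⟩ := ihv
      refine ⟨f1 * f2, k1 + l1, ?_, ?_, ?_⟩
      · rw [map_mul, ha1, hb1]
      · rw [map_mul, ha2, hb2]
      · rw [map_mul]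
        linear_combination (Q ^ l1 * v) * ha3 + ι f1 * hb3
  -- independence of 1 and W over B
  have hindep : ∀ c0 c1 : Localization.Away (xw F m 1), c0 ∈ B → c1 ∈ B →
      c0 + c1 * W = 0 → c0 = 0 ∧ c1 = 0 := by
    intro c0 c1 hc0 hc1 hsum
    obtain ⟨f0, k0, h01, h02, h03⟩ := hBL c0 hc0
    obtain ⟨f1, k1, h11, h12, h13⟩ := hBL c1 hc1
    have hg : xw F m 1 ^ k1 * f0 + xw F m 1 ^ k0 * f1 * uw F m 1 2 = 0 := by
      apply hinj
      simp only [map_add, map_mul, map_pow, map_zero, ← hQ, ← hW]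
      linear_combination (-(Q ^ k1)) * h03 - (Q ^ k0 * W) * h13 + Q ^ (k0 + k1) * hsum
    have hg2 : xw F m 1 ^ k1 * f0 + xw F m 1 ^ k0 * f1 * (uw F m 1 2 + xw F m 1 ^ 2) = 0 := by
      have hgs := congrArg σ2 hg
      simpa only [map_add, map_mul, map_pow, map_zero, hσ2x 1, h02, h12, hU2] using hgs
    have hf1 : f1 = 0 := by
      have h3 : xw F m 1 ^ (k0 + 2) * f1 = 0 := by linear_combination hg2 - hg
      rcases mul_eq_zero.mp h3 with h | h
      · exact absurd h (pow_ne_zero _ hx1ne)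
      · exact h
    have hc10 : c1 = 0 := by
      have h4 : Q ^ k1 * c1 = 0 := by rw [h13, hf1, map_zero]
      calc c1 = (Q * zinv) ^ k1 * c1 := by rw [hQz, one_pow, one_mul]
      _ = zinv ^ k1 * (Q ^ k1 * c1) := by ring
      _ = 0 := by rw [h4, mul_zero]
    refine ⟨?_, hc10⟩
    rw [hc10, zero_mul, add_zero] at hsum; exact hsum
  -- quadratic relations
  have hY2R : Y * Y = ι (Nw F m 1) + Q * Y := by
    have h := congrArg ι (idI1 (F := F) (m := m))
    simp only [map_add, map_mul, map_pow, ← hQ, ← hY] at h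
    linear_combination h
  have hW2R : W * W = (Q * Q * ι (Nw F m 2) + ι (xw F m 2) * ι (xw F m 2) * ι (Nw F m 1)
      + Q * ι (tw F m 3)) + (Q * Q) * W := by
    have h := congrArg ι (idI2 (F := F) (m := m))
    simp only [map_add, map_mul, map_pow, ← hQ, ← hW] at h
    linear_combination h
  have hrB : Q * Q * ι (Nw F m 2) + ι (xw F m 2) * ι (xw F m 2) * ι (Nw F m 1)
      + Q * ι (tw F m 3) ∈ B :=
    add_mem (add_mem (mul_mem (mul_mem hQB hQB) hN2B)
      (mul_mem (mul_mem (hxB 2) (hxB 2)) hN1B)) (mul_mem hQB (htB 3 le_rfl (by omega)))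
  -- representation of variables
  have hXrep : ∀ n : Fin m ⊕ Fin (m + 1), ∃ a b c d, a ∈ B ∧ b ∈ B ∧ c ∈ B ∧ d ∈ B ∧
      ι (X n) = a + b * Y + c * W + d * (Y * W) := by
    rintro (i | i)
    · refine ⟨ι (xw F m (i.1 + 1)), 0, 0, 0, hxB _, zero_mem B, zero_mem B, zero_mem B, ?_⟩
      have hx : xw F m (i.1 + 1) = X (Sum.inl i) := by
        rw [xw, dif_pos ⟨by omega, by omega⟩]
        have he : (⟨i.1 + 1 - 1, by omega⟩ : Fin m) = i := by ext; simp
        rw [he]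
      rw [← hx]; ring
    · have hyX : yw F m (i.1 + 1) = X (Sum.inr i) := by
        rw [yw, dif_pos ⟨by omega, by omega⟩]
        have he : (⟨i.1 + 1 - 1, by omega⟩ : Fin (m + 1)) = i := by ext; simp
        rw [he]
      rcases Nat.lt_or_ge i.1 1 with h0 | h0
      · have h00 : i.1 + 1 = 1 := by omega
        refine ⟨0, 1, 0, 0, zero_mem B, one_mem B, zero_mem B, zero_mem B, ?_⟩
        rw [← hyX, h00, ← hY]; ring
      rcases Nat.lt_or_ge i.1 2 with h1 | h1
      · have h00 : i.1 + 1 = 2 := by omega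
        refine ⟨0, zinv * ι (xw F m 2), zinv, 0, zero_mem B, mul_mem hzB (hxB 2), hzB,
          zero_mem B, ?_⟩
        have h3 : ι (xw F m 1 * yw F m 2) = ι (uw F m 1 2 + xw F m 2 * yw F m 1) := by
          rw [idI3]
        simp only [map_add, map_mul, ← hQ, ← hY, ← hW] at h3
        rw [← hyX, h00]
        linear_combination zinv * h3 - ι (yw F m 2) * hQz
      · have h4 : ι (xw F m 1 ^ 2 * yw F m (i.1 + 1)) = ι (tw F m (i.1 + 1)
            + xw F m (i.1 + 1 - 1) * uw F m 1 2
            + xw F m 1 * xw F m (i.1 + 1) * yw F m 1) := by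
          rw [idI4]
        simp only [map_add, map_mul, map_pow, ← hQ, ← hY, ← hW] at h4
        refine ⟨zinv * zinv * ι (tw F m (i.1 + 1)), zinv * ι (xw F m (i.1 + 1)),
          zinv * zinv * ι (xw F m (i.1 + 1 - 1)), 0,
          mul_mem (mul_mem hzB hzB) (htB _ (by omega) (by omega)),
          mul_mem hzB (hxB _), mul_mem (mul_mem hzB hzB) (hxB _), zero_mem B, ?_⟩
        rw [← hyX]
        linear_combination (zinv * zinv) * h4
          + (zinv * ι (xw F m (i.1 + 1)) * Y - (Q * zinv + 1) * ι (yw F m (i.1 + 1))) * hQz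
  -- representation of arbitrary polynomials
  have hM0 : ∀ f : MvPolynomial (Fin m ⊕ Fin (m + 1)) F, ∃ a b c d,
      a ∈ B ∧ b ∈ B ∧ c ∈ B ∧ d ∈ B ∧ ι f = a + b * Y + c * W + d * (Y * W) := by
    intro f
    induction f using MvPolynomial.induction_on with
    | C r =>
      refine ⟨ι (C r), 0, 0, 0, ?_, zero_mem B, zero_mem B, zero_mem B, by ring⟩
      have hr : ι (C r) = algebraMap F (Localization.Away (xw F m 1)) r := by
        rw [← MvPolynomial.algebraMap_eq]
        exact (IsScalarTower.algebraMap_apply F _ _ r).symm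
      rw [hr]; exact algebraMap_mem B r
    | add p q ihp ihq =>
      obtain ⟨a, b, c, d, ha, hb, hc, hd, he⟩ := ihp
      obtain ⟨a', b', c', d', ha', hb', hc', hd', he'⟩ := ihq
      exact ⟨a + a', b + b', c + c', d + d', add_mem ha ha', add_mem hb hb', add_mem hc hc',
        add_mem hd hd', by rw [map_add, he, he']; ring⟩
    | mul_X p n ihp =>
      obtain ⟨a, b, c, d, ha, hb, hc, hd, he⟩ := ihp
      obtain ⟨a', b', c', d', ha', hb', hc', hd', he'⟩ := hXrep n
      refine ⟨_, _, _, _, ?_, ?_, ?_, ?_,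
        (by rw [map_mul, he, he']
            exact quad_mul Y W (ι (Nw F m 1)) Q
              (Q * Q * ι (Nw F m 2) + ι (xw F m 2) * ι (xw F m 2) * ι (Nw F m 1)
                + Q * ι (tw F m 3))
              (Q * Q) a b c d a' b' c' d' hY2R hW2R)⟩
      · exact add_mem (add_mem (add_mem (mul_mem ha ha') (mul_mem (mul_mem hb hb') hN1B))
          (mul_mem (mul_mem hc hc') hrB)) (mul_mem (mul_mem hd hd') (mul_mem hN1B hrB))
      · exact add_mem (add_mem (add_mem (add_mem (mul_mem ha hb') (mul_mem ha' hb))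
          (mul_mem (mul_mem hb hb') hQB))
          (mul_mem (add_mem (mul_mem hc hd') (mul_mem hc' hd)) hrB))
          (mul_mem (mul_mem hd hd') (mul_mem hQB hrB))
      · exact add_mem (add_mem (add_mem (add_mem (mul_mem ha hc') (mul_mem ha' hc))
          (mul_mem (mul_mem hc hc') (mul_mem hQB hQB)))
          (mul_mem (add_mem (mul_mem hb hd') (mul_mem hb' hd)) hN1B))
          (mul_mem (mul_mem hd hd') (mul_mem hN1B (mul_mem hQB hQB)))
      · exact add_mem (add_mem (add_mem (add_mem (add_mem (add_mem (mul_mem ha hd')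
          (mul_mem ha' hd)) (mul_mem hb hc')) (mul_mem hb' hc))
          (mul_mem (add_mem (mul_mem hb hd') (mul_mem hb' hd)) hQB))
          (mul_mem (add_mem (mul_mem hc hd') (mul_mem hc' hd)) (mul_mem hQB hQB)))
          (mul_mem (mul_mem hd hd') (mul_mem hQB (mul_mem hQB hQB)))
  -- main lemma : invariants land in B
  have hmain : ∀ f, σ1 f = f → σ2 f = f → ι f ∈ B := by
    intro f hf1 hf2
    obtain ⟨a, b, c, d, ha, hb, hc, hd, he⟩ := hM0 f
    have hτ1Y : τ1 Y = Y + Q := by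
      rw [hY, hτ1, hy1 1, map_add, ← hQ]
    have hτ1W : τ1 W = W := by rw [hW, hτ1, hU1]
    have hτ2Y : τ2 Y = Y := by
      rw [hY, hτ2, hy2 1, show (1 - 1 : ℕ) = 0 from rfl, xw_zero, add_zero]
    have hτ2W : τ2 W = W + Q * Q := by
      rw [hW, hτ2, hU2, map_add, map_pow, ← hQ, ← hW]; ring
    have e1 : ι f = a + b * (Y + Q) + c * W + d * ((Y + Q) * W) := by
      have h := congrArg τ1 he
      rw [hτ1, hf1] at h
      simpa only [map_add, map_mul, hτ1Y, hτ1W, hfix1 a ha, hfix1 b hb, hfix1 c hc,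
        hfix1 d hd] using h
    have key1 : b * Q + d * Q * W = 0 := by linear_combination he - e1
    obtain ⟨hbQ, hdQ⟩ := hindep (b * Q) (d * Q) (mul_mem hb hQB) (mul_mem hd hQB)
      (by linear_combination key1)
    have hb0 : b = 0 := by
      calc b = (Q * zinv) * b := by rw [hQz, one_mul]
      _ = zinv * (b * Q) := by ring
      _ = 0 := by rw [hbQ, mul_zero]
    have hd0 : d = 0 := by
      calc d = (Q * zinv) * d := by rw [hQz, one_mul]
      _ = zinv * (d * Q) := by ring
      _ = 0 := by rw [hdQ, mul_zero]
    have e2 : ι f = a + b * Y + c * (W + Q * Q) + d * (Y * (W + Q * Q)) := by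
      have h := congrArg τ2 he
      rw [hτ2, hf2] at h
      simpa only [map_add, map_mul, hτ2Y, hτ2W, hfix2 a ha, hfix2 b hb, hfix2 c hc,
        hfix2 d hd] using h
    rw [hb0, hd0] at he e2
    have key2 : c * (Q * Q) = 0 := by linear_combination he - e2
    have hc0 : c = 0 := by
      calc c = (Q * zinv) * ((Q * zinv) * c) := by rw [hQz, one_mul, one_mul]
      _ = (zinv * zinv) * (c * (Q * Q)) := by ring
      _ = 0 := by rw [key2, mul_zero]
    have hfa : ι f = a := by rw [hc0] at he; linear_combination he
    rw [hfa]; exact ha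
  -- conclusion
  ext z
  simp only [Set.mem_setOf_eq, SetLike.mem_coe]
  constructor
  · rintro ⟨f, k, hf1, hf2, hk⟩
    have hz : z = zinv ^ k * ι f := by
      calc z = (Q * zinv) ^ k * z := by rw [hQz, one_pow, one_mul]
      _ = zinv ^ k * (Q ^ k * z) := by ring
      _ = zinv ^ k * ι f := by rw [hk]
    rw [hz]
    exact mul_mem (pow_mem hzB k) (hmain f hf1 hf2)
  · intro hz
    exact hBL z hz
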